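/- Let f ∈ ℤ[x] be a monic polynomial all of whose complex roots are nonzero and have modulus at most 1. Then every root of f is a root of unity. -/

import Mathlib

open Polynomial IntermediateField

private lemma aux_abs_prod : ∀ (s : Multiset ℂ), ‖s.prod‖ = (s.map (‖·‖)).prod := by
  intro s
  induction s using Multiset.induction with
  | empty => simp
  | cons a t ih => simp [Multiset.prod_cons, norm_mul, ih]

private lemma aux_prod_le_one : ∀ (s : Multiset ℝ), (∀ x ∈ s, 0 ≤ x ∧ x ≤ 1) →
    0 ≤ s.prod ∧ s.prod ≤ 1 := by
  intro s
  induction s using Multiset.induction with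
  | empty => simp
  | cons a t ih =>
    intro h
    have ha := h a (Multiset.mem_cons_self a t)
    have ht := ih (fun x hx => h x (Multiset.mem_cons_of_mem hx))
    rw [Multiset.prod_cons]
    constructor
    · exact mul_nonneg ha.1 ht.1
    · calc a * t.prod ≤ 1 * 1 := mul_le_mul ha.2 ht.2 ht.1 zero_le_one
        _ = 1 := one_mul 1

private lemma aux_all_eq_one : ∀ (s : Multiset ℝ), (∀ x ∈ s, 0 < x ∧ x ≤ 1) →
    1 ≤ s.prod → ∀ x ∈ s, x = 1 := by
  intro s
  induction s using Multiset.induction with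
  | empty => simp
  | cons a t ih =>
    intro h hp x hx
    have ha := h a (Multiset.mem_cons_self a t)
    have ht' : ∀ y ∈ t, 0 < y ∧ y ≤ 1 := fun y hy => h y (Multiset.mem_cons_of_mem hy)
    have htle := aux_prod_le_one t (fun y hy => ⟨(ht' y hy).1.le, (ht' y hy).2⟩)
    rw [Multiset.prod_cons] at hp
    have htpos : 0 < t.prod := Multiset.prod_pos (fun y hy => (ht' y hy).1)
    have ha1 : a = 1 := by nlinarith [ha.2, htle.2]
    have htge : 1 ≤ t.prod := by nlinarith
    rcases Multiset.mem_cons.1 hx with rfl | hx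
    · exact ha1
    · exact ih ht' htge x hx

theorem kronecker_roots_of_unity (f : Polynomial ℤ) (hmonic : f.Monic)
    (hroots : ∀ z ∈ (f.map (Int.castRingHom ℂ)).roots, 0 < ‖z‖ ∧ ‖z‖ ≤ 1) :
    ∀ z ∈ (f.map (Int.castRingHom ℂ)).roots, ∃ n : ℕ, 1 ≤ n ∧ z ^ n = 1 := by
  intro z hz
  have hf0 : f ≠ 0 := hmonic.ne_zero
  have hmap0 : f.map (Int.castRingHom ℂ) ≠ 0 := (hmonic.map _).ne_zero
  have hzroot : IsRoot (f.map (Int.castRingHom ℂ)) z := ((mem_roots hmap0).1 hz)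
  have haev : aeval z f = 0 := by
    rwa [aeval_def, eval₂_eq_eval_map]
  have hint : IsIntegral ℤ z := ⟨f, hmonic, haev⟩
  set p := minpoly ℤ z with hp
  have hpmonic : p.Monic := minpoly.monic hint
  have hpdvd : p ∣ f := minpoly.isIntegrallyClosed_dvd hint haev
  have hsub : (p.map (Int.castRingHom ℂ)).roots ≤ (f.map (Int.castRingHom ℂ)).roots :=
    roots.le_of_dvd hmap0 (Polynomial.map_dvd _ hpdvd)
  have hproots : ∀ w ∈ (p.map (Int.castRingHom ℂ)).roots,
      0 < ‖w‖ ∧ ‖w‖ ≤ 1 := fun w hw => hroots w (Multiset.mem_of_le hsub hw)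
  have hpm : (p.map (Int.castRingHom ℂ)).Monic := hpmonic.map _
  have hsplit : Splits (p.map (Int.castRingHom ℂ)) :=
    IsAlgClosed.splits _
  have hcoeff := hsplit.coeff_zero_eq_prod_roots_of_monic hpm
  have hprodpos : 0 < ‖(p.map (Int.castRingHom ℂ)).roots.prod‖ := by
    rw [aux_abs_prod]
    apply Multiset.prod_pos
    intro a ha
    obtain ⟨w, hw, rfl⟩ := Multiset.mem_map.1 ha
    exact (hproots w hw).1
  have hc0 : (p.map (Int.castRingHom ℂ)).coeff 0 = ((p.coeff 0 : ℤ) : ℂ) := by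
    simp [coeff_map]
  have habseq : ‖(p.map (Int.castRingHom ℂ)).coeff 0‖
      = ‖(p.map (Int.castRingHom ℂ)).roots.prod‖ := by
    rw [hcoeff]; simp [norm_mul, norm_pow]
  have hc0ne : p.coeff 0 ≠ 0 := by
    intro h
    rw [hc0, h, Int.cast_zero, norm_zero] at habseq
    rw [← habseq] at hprodpos
    exact lt_irrefl 0 hprodpos
  have hge1 : (1 : ℝ) ≤ ‖(p.map (Int.castRingHom ℂ)).roots.prod‖ := by
    have h1 : (1 : ℝ) ≤ ‖((p.coeff 0 : ℤ) : ℂ)‖ := by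
      rw [Complex.norm_intCast]
      exact_mod_cast Int.one_le_abs hc0ne
    calc (1:ℝ) ≤ ‖(p.map (Int.castRingHom ℂ)).coeff 0‖ := by rwa [hc0]
      _ = ‖(p.map (Int.castRingHom ℂ)).roots.prod‖ := habseq
  have habs1 : ∀ w ∈ (p.map (Int.castRingHom ℂ)).roots, ‖w‖ = 1 := by
    intro w hw
    have := aux_all_eq_one ((p.map (Int.castRingHom ℂ)).roots.map (‖·‖))
      (by intro x hx; obtain ⟨v, hv, rfl⟩ := Multiset.mem_map.1 hx; exact hproots v hv)
      (by rwa [aux_abs_prod] at hge1)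
    exact this ‖w‖ (Multiset.mem_map_of_mem _ hw)
  -- Now pass to the number field ℚ⟮z⟯
  have hintQ : IsIntegral ℚ z := hint.tower_top
  haveI : FiniteDimensional ℚ ℚ⟮z⟯ := IntermediateField.adjoin.finiteDimensional hintQ
  haveI : NumberField ℚ⟮z⟯ := ⟨⟩
  set x : ℚ⟮z⟯ := IntermediateField.AdjoinSimple.gen ℚ z with hx
  have hxz : (algebraMap ℚ⟮z⟯ ℂ) x = z := rfl
  have hxint : IsIntegral ℤ x := by
    rwa [← isIntegral_algebraMap_iff (algebraMap ℚ⟮z⟯ ℂ).injective, hxz]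
  have hminx : minpoly ℚ x = minpoly ℚ z := by
    rw [← minpoly.algebraMap_eq (algebraMap ℚ⟮z⟯ ℂ).injective, hxz]
  have hminQ : minpoly ℚ z = (minpoly ℤ z).map (Int.castRingHom ℚ) :=
    minpoly.isIntegrallyClosed_eq_field_fractions' ℚ hint
  have hnorm : ∀ φ : ℚ⟮z⟯ →+* ℂ, ‖φ x‖ = 1 := by
    intro φ
    have hmem : φ x ∈ (minpoly ℚ x).rootSet ℂ := by
      rw [← NumberField.Embeddings.range_eval_eq_rootSet_minpoly ℚ⟮z⟯ ℂ x]
      exact ⟨φ, rfl⟩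
    rw [mem_rootSet] at hmem
    have hroot : φ x ∈ (p.map (Int.castRingHom ℂ)).roots := by
      rw [mem_roots ((hpmonic.map (Int.castRingHom ℂ)).ne_zero)]
      have heq : Polynomial.eval (φ x) (p.map (Int.castRingHom ℂ))
          = aeval (φ x) (minpoly ℚ x) := by
        rw [hminx, hminQ, aeval_def, eval₂_eq_eval_map, Polynomial.map_map]
        congr 2
      rw [IsRoot, heq, hmem.2]
    simpa using habs1 _ hroot
  obtain ⟨n, hn, hxn⟩ := NumberField.Embeddings.pow_eq_one_of_norm_eq_one ℚ⟮z⟯ ℂ hxint hnorm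
  refine ⟨n, hn, ?_⟩
  have := congrArg (algebraMap ℚ⟮z⟯ ℂ) hxn
  rwa [map_pow, hxz, map_one] at this
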